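/- Let V1, …, Vk be pairwise orthogonal unit vectors in a bipartite Hilbert space H_A ⊗ H_B such that Σ_{i=1}^k G(ψ_i) − (k−1) > 0, where G(ψ_i) = 1 − (largest squared Schmidt coefficient of ψ_i). Then the subspace spanned by ψ_1, …, ψ_k is completely entangled: every nonzero vector in the span is entangled. -/

import Mathlib

/-- Tensor product of vectors, in coordinates. -/
def tp {a b : Type*} (u : a → ℂ) (v : b → ℂ) : a × b → ℂ := fun p => u p.1 * v p.2

/-- A bipartite vector is a product vector if it is a tensor product of vectors. -/
def IsProdVec {a b : Type*} (ψ : a × b → ℂ) : Prop := ∃ u v, ψ = tp u v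

/-- Partial trace over the second tensor factor. -/
noncomputable def ptrace₂ {a b : Type*} [Fintype b] (ρ : Matrix (a × b) (a × b) ℂ) :
    Matrix a a ℂ := Matrix.of fun i j => ∑ k, ρ (i, k) (j, k)

/-- Rank-one projector `|ψ⟩⟨ψ|`. -/
def proj {m : Type*} (ψ : m → ℂ) : Matrix m m ℂ := Matrix.of fun i j => ψ i * star (ψ j)

/-- Largest eigenvalue of a Hermitian matrix, as the supremum of its quadratic form
over unit vectors. -/
noncomputable def lmax {m : Type*} [Fintype m] (ρ : Matrix m m ℂ) : ℝ :=
  sSup {r : ℝ | ∃ v : m → ℂ, (∑ i, Complex.normSq (v i)) = 1 ∧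
    r = (dotProduct (star v) (ρ.mulVec v)).re}

namespace Aux15

/-- Cauchy–Schwarz for complex sums. -/
lemma cs {ι : Type*} [Fintype ι] (f g : ι → ℂ) :
    Complex.normSq (∑ i, f i * g i) ≤
      (∑ i, Complex.normSq (f i)) * ∑ i, Complex.normSq (g i) := by
  have h1 : ‖∑ i, f i * g i‖ ≤ ∑ i, ‖f i‖ * ‖g i‖ := by
    calc ‖∑ i, f i * g i‖ ≤ ∑ i, ‖f i * g i‖ :=
          norm_sum_le Finset.univ (fun i => f i * g i)
      _ = ∑ i, ‖f i‖ * ‖g i‖ := by simp [norm_mul]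
  have h2 := Finset.sum_mul_sq_le_sq_mul_sq Finset.univ
    (fun i => ‖f i‖) (fun i => ‖g i‖)
  have h3 : ‖∑ i, f i * g i‖ ^ 2 ≤
      (∑ i, ‖f i‖ * ‖g i‖) ^ 2 := by
    apply pow_le_pow_left₀ (norm_nonneg _) h1
  calc Complex.normSq (∑ i, f i * g i) = ‖∑ i, f i * g i‖ ^ 2 :=
        (Complex.sq_norm _).symm
    _ ≤ (∑ i, ‖f i‖ * ‖g i‖) ^ 2 := h3
    _ ≤ (∑ i, ‖f i‖ ^ 2) * ∑ i, ‖g i‖ ^ 2 := h2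
    _ = (∑ i, Complex.normSq (f i)) * ∑ i, Complex.normSq (g i) := by
        simp [Complex.sq_norm]

variable {a b : Type*} [Fintype a] [Fintype b]

noncomputable def F (ψ : a × b → ℂ) (u : a → ℂ) : b → ℂ :=
  fun m => ∑ i, star (u i) * ψ (i, m)

lemma quadform (ψ : a × b → ℂ) (u : a → ℂ) :
    dotProduct (star u) ((ptrace₂ (proj ψ)).mulVec u)
      = ∑ m, (Complex.normSq (F ψ u m) : ℂ) := by
  have hz : ∀ z : ℂ, (Complex.normSq z : ℂ) = star z * z := by
    intro z; rw [Complex.normSq_eq_conj_mul_self]; rfl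
  simp only [hz, F, dotProduct, Matrix.mulVec, ptrace₂, proj, Matrix.of_apply,
    Pi.star_apply, star_sum, star_mul, star_star, Finset.mul_sum, Finset.sum_mul]
  have swap : ∀ (f : a → a → b → ℂ),
      (∑ y, ∑ x, ∑ i, f y x i) = ∑ i : b, ∑ y, ∑ x, f y x i := by
    intro f
    calc (∑ y, ∑ x, ∑ i, f y x i) = ∑ y, ∑ i, ∑ x, f y x i :=
          Finset.sum_congr rfl fun y _ => Finset.sum_comm
      _ = ∑ i, ∑ y, ∑ x, f y x i := Finset.sum_comm
  refine Eq.trans (swap _) ?_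
  apply Finset.sum_congr rfl
  intro m _
  apply Finset.sum_congr rfl
  intro x _
  apply Finset.sum_congr rfl
  intro y _
  ring

lemma quadform_re (ψ : a × b → ℂ) (u : a → ℂ) :
    (dotProduct (star u) ((ptrace₂ (proj ψ)).mulVec u)).re
      = ∑ m, Complex.normSq (F ψ u m) := by
  rw [quadform, Complex.re_sum]
  simp

lemma bdd (ψ : a × b → ℂ) (hψ : ∑ p, Complex.normSq (ψ p) = 1) :
    BddAbove {r : ℝ | ∃ w : a → ℂ, (∑ i, Complex.normSq (w i)) = 1 ∧
      r = (dotProduct (star w) ((ptrace₂ (proj ψ)).mulVec w)).re} := by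
  refine ⟨1, ?_⟩
  rintro r ⟨w, hw, rfl⟩
  rw [quadform_re]
  calc ∑ m, Complex.normSq (F ψ w m)
      ≤ ∑ m, (∑ i, Complex.normSq (star (w i))) * ∑ i, Complex.normSq (ψ (i, m)) := by
        apply Finset.sum_le_sum
        intro m _
        exact cs (fun i => star (w i)) (fun i => ψ (i, m))
    _ = ∑ m, ∑ i, Complex.normSq (ψ (i, m)) := by
        simp only [Complex.star_def, Complex.normSq_conj, hw, one_mul]
    _ = ∑ p, Complex.normSq (ψ p) := by
        rw [Fintype.sum_prod_type, Finset.sum_comm]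
    _ = 1 := hψ

lemma Q_le (ψ : a × b → ℂ) (hψ : ∑ p, Complex.normSq (ψ p) = 1) (u : a → ℂ) :
    ∑ m, Complex.normSq (F ψ u m)
      ≤ (∑ i, Complex.normSq (u i)) * lmax (ptrace₂ (proj ψ)) := by
  set s := ∑ i, Complex.normSq (u i) with hs
  have hs0 : 0 ≤ s := Finset.sum_nonneg fun i _ => Complex.normSq_nonneg _
  rcases eq_or_lt_of_le hs0 with h0 | hpos
  · -- s = 0, so u = 0
    have hu : ∀ i, u i = 0 := by
      intro i
      have := (Finset.sum_eq_zero_iff_of_nonneg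
        (fun i _ => Complex.normSq_nonneg (u i))).mp h0.symm i (Finset.mem_univ i)
      exact Complex.normSq_eq_zero.mp this
    have : ∀ m, F ψ u m = 0 := by
      intro m; simp [F, hu]
    simp [this, ← h0]
  · -- s > 0
    have hts : Real.sqrt s > 0 := Real.sqrt_pos.mpr hpos
    set t : ℝ := Real.sqrt s with ht
    set u' : a → ℂ := fun i => (t⁻¹ : ℂ) * u i with hu'
    have hns : ∀ i, Complex.normSq (u' i) = s⁻¹ * Complex.normSq (u i) := by
      intro i
      rw [hu', Complex.normSq_mul]
      congr 1
      rw [← Complex.ofReal_inv, Complex.normSq_ofReal, ht, ← Real.sqrt_inv,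
        Real.mul_self_sqrt (inv_nonneg.mpr hs0)]
    have hunit' : ∑ i, Complex.normSq (u' i) = 1 := by
      simp only [hns, ← Finset.mul_sum, ← hs]
      field_simp
    have hF' : ∀ m, Complex.normSq (F ψ u' m) = s⁻¹ * Complex.normSq (F ψ u m) := by
      intro m
      have : F ψ u' m = (t⁻¹ : ℂ) * F ψ u m := by
        simp only [F, hu', star_mul, Finset.mul_sum]
        apply Finset.sum_congr rfl
        intro i _
        simp only [Complex.star_def, map_inv₀, Complex.conj_ofReal]
        ring
      rw [this, Complex.normSq_mul]
      congr 1
      rw [← Complex.ofReal_inv, Complex.normSq_ofReal, ht, ← Real.sqrt_inv,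
        Real.mul_self_sqrt (inv_nonneg.mpr hs0)]
    have hmem : (∑ m, Complex.normSq (F ψ u' m)) ≤ lmax (ptrace₂ (proj ψ)) := by
      apply le_csSup (bdd ψ hψ)
      exact ⟨u', hunit', (quadform_re ψ u').symm⟩
    have : (∑ m, Complex.normSq (F ψ u' m)) = s⁻¹ * ∑ m, Complex.normSq (F ψ u m) := by
      simp only [hF', Finset.mul_sum]
    rw [this] at hmem
    have h2 := mul_le_mul_of_nonneg_left hmem (le_of_lt hpos)
    rw [← mul_assoc, mul_inv_cancel₀ (ne_of_gt hpos), one_mul] at h2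
    exact h2

lemma inner_self {ι : Type*} [Fintype ι] (x : ι → ℂ) :
    (∑ i, star (x i) * x i) = ((∑ i, Complex.normSq (x i) : ℝ) : ℂ) := by
  push_cast
  exact Finset.sum_congr rfl fun i _ => by rw [Complex.normSq_eq_conj_mul_self]; rfl

end Aux15

open Aux15

/-- If `ψ₁, …, ψ_k` are pairwise orthogonal unit vectors with
`Σᵢ G(ψᵢ) − (k−1) > 0`, where `G(ψᵢ) = 1 −` (largest squared Schmidt coefficient of
`ψᵢ`), then the subspace they span is completely entangled. -/
theorem stmt15 {a b : Type*} [Fintype a] [Fintype b] (k : ℕ)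
    (ψ : Fin k → (a × b → ℂ))
    (hunit : ∀ i, ∑ p, Complex.normSq (ψ i p) = 1)
    (horth : ∀ i j, i ≠ j → ∑ p, star (ψ i p) * ψ j p = 0)
    (hG : (∑ i, (1 - lmax (ptrace₂ (proj (ψ i))))) - (k - 1 : ℝ) > 0) :
    ∀ χ ∈ Submodule.span ℂ (Set.range ψ), χ ≠ 0 → ¬ IsProdVec χ := by
  intro χ hχ hne hprod
  obtain ⟨u, v, huv⟩ := hprod
  rw [Submodule.mem_span_range_iff_exists_fun ℂ] at hχ
  obtain ⟨c, hc⟩ := hχ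
  have hχp : ∀ p, χ p = ∑ i, c i * ψ i p := by
    intro p
    rw [← hc]
    simp [Finset.sum_apply]
  have hinner : ∀ i j : Fin k,
      (∑ p, star (ψ i p) * ψ j p) = if i = j then 1 else 0 := by
    intro i j
    by_cases h : i = j
    · subst h
      rw [if_pos rfl, inner_self, hunit i, Complex.ofReal_one]
    · rw [if_neg h]
      exact horth i j h
  have hcval : ∀ j, (∑ p, star (ψ j p) * χ p) = c j := by
    intro j
    have step : ∀ p, star (ψ j p) * χ p = ∑ i, c i * (star (ψ j p) * ψ i p) := by
      intro p
      rw [hχp p, Finset.mul_sum]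
      exact Finset.sum_congr rfl fun i _ => by ring
    simp only [step]
    rw [Finset.sum_comm]
    have : ∀ i, (∑ p, c i * (star (ψ j p) * ψ i p)) = c i * if j = i then 1 else 0 := by
      intro i
      rw [← Finset.mul_sum, hinner j i]
    simp only [this]
    simp
  have hT : (∑ p, Complex.normSq (χ p)) = ∑ j, Complex.normSq (c j) := by
    apply Complex.ofReal_injective
    rw [← inner_self χ, ← inner_self c]
    have hstar : ∀ p, star (χ p) = ∑ i, star (c i) * star (ψ i p) := by
      intro p
      rw [hχp p, star_sum]
      exact Finset.sum_congr rfl fun i _ => star_mul' _ _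
    calc ∑ p, star (χ p) * χ p
        = ∑ p, ∑ i, star (c i) * (star (ψ i p) * χ p) := by
          apply Finset.sum_congr rfl
          intro p _
          rw [hstar p, Finset.sum_mul]
          exact Finset.sum_congr rfl fun i _ => by ring
      _ = ∑ i, ∑ p, star (c i) * (star (ψ i p) * χ p) := Finset.sum_comm
      _ = ∑ i, star (c i) * c i := by
          apply Finset.sum_congr rfl
          intro i _
          rw [← Finset.mul_sum, hcval i]
  have hprodnorm : (∑ p, Complex.normSq (χ p))
      = (∑ i, Complex.normSq (u i)) * ∑ m, Complex.normSq (v m) := by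
    rw [huv, Fintype.sum_prod_type, Finset.sum_mul_sum]
    apply Finset.sum_congr rfl
    intro i _
    apply Finset.sum_congr rfl
    intro m _
    exact Complex.normSq_mul _ _
  have hcform : ∀ j, c j = ∑ m, star (F (ψ j) u m) * v m := by
    intro j
    rw [← hcval j, huv, Fintype.sum_prod_type, Finset.sum_comm]
    apply Finset.sum_congr rfl
    intro m _
    simp only [F, star_sum, star_mul, star_star, Finset.sum_mul, tp]
    apply Finset.sum_congr rfl
    intro i _
    ring
  have hbound : ∀ j, Complex.normSq (c j)
      ≤ ((∑ i, Complex.normSq (u i)) * lmax (ptrace₂ (proj (ψ j))))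
          * ∑ m, Complex.normSq (v m) := by
    intro j
    rw [hcform j]
    calc Complex.normSq (∑ m, star (F (ψ j) u m) * v m)
        ≤ (∑ m, Complex.normSq (star (F (ψ j) u m))) * ∑ m, Complex.normSq (v m) :=
          cs _ _
      _ = (∑ m, Complex.normSq (F (ψ j) u m)) * ∑ m, Complex.normSq (v m) := by
          simp [Complex.star_def, Complex.normSq_conj]
      _ ≤ ((∑ i, Complex.normSq (u i)) * lmax (ptrace₂ (proj (ψ j))))
            * ∑ m, Complex.normSq (v m) := by
          apply mul_le_mul_of_nonneg_right (Q_le (ψ j) (hunit j) u)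
          exact Finset.sum_nonneg fun m _ => Complex.normSq_nonneg _
  set L := ∑ j, lmax (ptrace₂ (proj (ψ j))) with hL
  have hL1 : L < 1 := by
    have hsum : (∑ i, (1 - lmax (ptrace₂ (proj (ψ i))))) = (k : ℝ) - L := by
      rw [Finset.sum_sub_distrib]
      simp [hL]
    rw [hsum] at hG
    linarith
  have hTpos : 0 < ∑ p, Complex.normSq (χ p) := by
    obtain ⟨p, hp⟩ : ∃ p, χ p ≠ 0 := by
      by_contra h
      push_neg at h
      exact hne (funext h)
    exact Finset.sum_pos' (fun q _ => Complex.normSq_nonneg _)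
      ⟨p, Finset.mem_univ p, Complex.normSq_pos.mpr hp⟩
  have hchain : (∑ j, Complex.normSq (c j)) ≤ (∑ p, Complex.normSq (χ p)) * L := by
    calc (∑ j, Complex.normSq (c j))
        ≤ ∑ j, ((∑ i, Complex.normSq (u i)) * lmax (ptrace₂ (proj (ψ j))))
            * ∑ m, Complex.normSq (v m) :=
          Finset.sum_le_sum fun j _ => hbound j
      _ = (∑ p, Complex.normSq (χ p)) * L := by
          rw [hprodnorm, hL, Finset.mul_sum]
          exact Finset.sum_congr rfl fun j _ => by ring
  have hlt : (∑ p, Complex.normSq (χ p)) * L < ∑ p, Complex.normSq (χ p) :=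
    mul_lt_of_lt_one_right hTpos hL1
  rw [hT] at hTpos hlt hchain
  linarith [hchain, hlt, hT]
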